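/- Let S ⊂ Sym(3,ℝ) be the linear space of symmetric 3×3 matrices K with k₁₃ = k₂₃, and let P = {K ∈ S : K positive definite}. Then the dual cone P* = {D ∈ S : ⟨K, D⟩ > 0 for all K ∈ closure(P) \ {0}} equals {D ∈ S : d₁₃ = d₂₃, d₁₁ > 0, d₂₂ > 0, d₃₃ > 0, d₁₂² < d₁₁ d₂₂, 4 d₁₃² < (d₁₁ + d₂₂ + 2 d₁₂) d₃₃}. -/

import Mathlib

open Matrix

namespace DualTriAux

abbrev M3 := Matrix (Fin 3) (Fin 3) ℝ

lemma herm_of_symm {A : M3} (h : A.IsSymm) : A.IsHermitian := by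
  rw [Matrix.IsHermitian, conjTranspose_eq_transpose_of_trivial, h]

lemma quad_expand (A : M3) (x : Fin 3 → ℝ) :
    star x ⬝ᵥ A *ᵥ x =
      A 0 0 * x 0 * x 0 + A 0 1 * x 0 * x 1 + A 0 2 * x 0 * x 2 +
      A 1 0 * x 1 * x 0 + A 1 1 * x 1 * x 1 + A 1 2 * x 1 * x 2 +
      A 2 0 * x 2 * x 0 + A 2 1 * x 2 * x 1 + A 2 2 * x 2 * x 2 := by
  simp [dotProduct, mulVec, Fin.sum_univ_three]; ring

lemma trace_expand (K D : M3) :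
    (K * D).trace = K 0 0 * D 0 0 + K 0 1 * D 1 0 + K 0 2 * D 2 0 +
      K 1 0 * D 0 1 + K 1 1 * D 1 1 + K 1 2 * D 2 1 +
      K 2 0 * D 0 2 + K 2 1 * D 1 2 + K 2 2 * D 2 2 := by
  simp [Matrix.trace, Matrix.diag, mul_apply, Fin.sum_univ_three]; ring

lemma trace_pos_aux {K Y : M3} (hK : K.PosSemidef) (hK0 : K ≠ 0) (hY : Y.PosDef) :
    0 < (K * Y).trace := by
  obtain ⟨B, rfl⟩ : ∃ B : M3, K = Bᴴ * B := by
    open scoped MatrixOrder in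
    exact CStarAlgebra.nonneg_iff_eq_star_mul_self.mp hK.nonneg
  rw [Matrix.mul_assoc, trace_mul_comm]
  have h1 : (B * Y * Bᴴ).trace = ∑ i : Fin 3, star (B i) ⬝ᵥ Y *ᵥ (B i) := by
    simp [Matrix.trace, Matrix.diag, mul_apply, dotProduct, mulVec, Fin.sum_univ_three,
      conjTranspose_apply]
    ring
  rw [h1]
  have hB : B ≠ 0 := by rintro rfl; simp at hK0
  obtain ⟨i, hi⟩ := Function.ne_iff.mp hB
  exact Finset.sum_pos' (fun j _ => hY.posSemidef.dotProduct_mulVec_nonneg (B j)) ⟨i, Finset.mem_univ i, hY.dotProduct_mulVec_pos hi⟩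

lemma elem_cont (i j : Fin 3) : Continuous fun K : M3 => K i j :=
  (continuous_apply j).comp (continuous_apply i)

lemma closure_sub {K : M3}
    (hK : K ∈ closure {K : M3 | (K.IsSymm ∧ K 0 2 = K 1 2) ∧ K.PosDef}) :
    (K.IsSymm ∧ K 0 2 = K 1 2) ∧ K.PosSemidef := by
  have hcl : IsClosed {K : M3 | (K.IsSymm ∧ K 0 2 = K 1 2) ∧ K.PosSemidef} := by
    have e : {K : M3 | (K.IsSymm ∧ K 0 2 = K 1 2) ∧ K.PosSemidef} =
        ({K : M3 | Kᵀ = K} ∩ {K : M3 | K 0 2 = K 1 2}) ∩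
          ({K : M3 | Kᴴ = K} ∩ ⋂ x : Fin 3 → ℝ, {K : M3 | 0 ≤ star x ⬝ᵥ K *ᵥ x}) := by
      ext K
      simp only [Set.mem_setOf_eq, Set.mem_inter_iff, Set.mem_iInter,
        Matrix.posSemidef_iff_dotProduct_mulVec, Matrix.IsSymm, Matrix.IsHermitian]
    rw [e]
    refine (IsClosed.inter (isClosed_eq (continuous_id.matrix_transpose) continuous_id)
        (isClosed_eq (elem_cont 0 2) (elem_cont 1 2))).inter
      ((isClosed_eq (continuous_id.matrix_conjTranspose) continuous_id).inter
        (isClosed_iInter fun x => isClosed_le continuous_const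
          (continuous_const.dotProduct (continuous_id.matrix_mulVec continuous_const))))
  have hsub : {K : M3 | (K.IsSymm ∧ K 0 2 = K 1 2) ∧ K.PosDef} ⊆
      {K : M3 | (K.IsSymm ∧ K 0 2 = K 1 2) ∧ K.PosSemidef} :=
    fun K hK => ⟨hK.1, hK.2.posSemidef⟩
  exact hcl.closure_subset_iff.mpr hsub hK

lemma ne_zero_iff_exists (x : Fin 3 → ℝ) (hx : x ≠ 0) : x 0 ≠ 0 ∨ x 1 ≠ 0 ∨ x 2 ≠ 0 := by
  by_contra hc
  push_neg at hc
  exact hx (funext fun j => by fin_cases j <;> simp [hc.1, hc.2.1, hc.2.2])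

lemma test_mem (v : Fin 3 → ℝ) (hv : v 0 = v 1 ∨ v 2 = 0) :
    Matrix.of (fun i j => v i * v j) ∈
      closure {K : M3 | (K.IsSymm ∧ K 0 2 = K 1 2) ∧ K.PosDef} := by
  set K0 : M3 := Matrix.of (fun i j => v i * v j) with hK0
  have htend : Filter.Tendsto (fun n : ℕ => K0 + ((n : ℝ) + 1)⁻¹ • (1 : M3))
      Filter.atTop (nhds K0) := by
    have h0 : Filter.Tendsto (fun n : ℕ => ((n : ℝ) + 1)⁻¹) Filter.atTop (nhds 0) := by
      simpa [one_div] using tendsto_one_div_add_atTop_nhds_zero_nat (𝕜 := ℝ)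
    simpa using (tendsto_const_nhds.add (h0.smul_const (1 : M3)))
  refine mem_closure_of_tendsto htend (Filter.Eventually.of_forall fun n => ?_)
  have hε : (0 : ℝ) < ((n : ℝ) + 1)⁻¹ := by positivity
  set ε := ((n : ℝ) + 1)⁻¹
  have hsymm : (K0 + ε • (1 : M3)).IsSymm := by
    refine Matrix.IsSymm.ext fun i j => ?_
    by_cases h : i = j
    · rw [h]
    · simp [hK0, Matrix.add_apply, Matrix.smul_apply, Matrix.one_apply_ne h,
        Matrix.one_apply_ne (Ne.symm h), mul_comm]
  have hedge : (K0 + ε • (1 : M3)) 0 2 = (K0 + ε • (1 : M3)) 1 2 := by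
    have h02 : ((0 : Fin 3) = 2) = False := by simp
    have h12 : ((1 : Fin 3) = 2) = False := by simp
    rcases hv with h | h <;>
      simp [hK0, Matrix.add_apply, Matrix.smul_apply, Matrix.one_apply, h02, h12, h]
  refine ⟨⟨hsymm, hedge⟩, Matrix.PosDef.of_dotProduct_mulVec_pos (herm_of_symm hsymm) fun x hx => ?_⟩
  rw [quad_expand]
  simp only [hK0, Matrix.add_apply, Matrix.smul_apply, Matrix.of_apply, Matrix.one_apply]
  norm_num [Fin.ext_iff]
  have hpos : 0 < x 0 * x 0 + x 1 * x 1 + x 2 * x 2 := by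
    rcases ne_zero_iff_exists x hx with h | h | h <;>
      nlinarith [mul_self_pos.mpr h, mul_self_nonneg (x 0), mul_self_nonneg (x 1),
        mul_self_nonneg (x 2)]
  nlinarith [sq_nonneg (v 0 * x 0 + v 1 * x 1 + v 2 * x 2), mul_pos hε hpos]

lemma test_val {D : M3}
    (hdual : ∀ K ∈ closure {K : M3 | (K.IsSymm ∧ K 0 2 = K 1 2) ∧ K.PosDef},
      K ≠ 0 → 0 < (K * D).trace)
    (v : Fin 3 → ℝ) (hv : v 0 = v 1 ∨ v 2 = 0) (hv0 : v ≠ 0) :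
    0 < v 0 * v 0 * D 0 0 + v 0 * v 1 * D 1 0 + v 0 * v 2 * D 2 0 +
      v 1 * v 0 * D 0 1 + v 1 * v 1 * D 1 1 + v 1 * v 2 * D 2 1 +
      v 2 * v 0 * D 0 2 + v 2 * v 1 * D 1 2 + v 2 * v 2 * D 2 2 := by
  set K0 : M3 := Matrix.of (fun i j => v i * v j) with hK0
  have hne : K0 ≠ 0 := by
    intro h
    rcases ne_zero_iff_exists v hv0 with hi | hi | hi
    · exact hi (mul_self_eq_zero.mp (by simpa [hK0] using congrFun (congrFun h 0) 0))
    · exact hi (mul_self_eq_zero.mp (by simpa [hK0] using congrFun (congrFun h 1) 1))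
    · exact hi (mul_self_eq_zero.mp (by simpa [hK0] using congrFun (congrFun h 2) 2))
  have := hdual K0 (test_mem v hv) hne
  rw [trace_expand] at this
  simpa [hK0] using this

end DualTriAux

open DualTriAux

theorem dual_cone_triangle_two_edges :
    {D : Matrix (Fin 3) (Fin 3) ℝ | (D.IsSymm ∧ D 0 2 = D 1 2) ∧
        ∀ K ∈ closure {K : Matrix (Fin 3) (Fin 3) ℝ |
            (K.IsSymm ∧ K 0 2 = K 1 2) ∧ K.PosDef},
          K ≠ 0 → 0 < (K * D).trace}
      = {D : Matrix (Fin 3) (Fin 3) ℝ | (D.IsSymm ∧ D 0 2 = D 1 2) ∧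
          0 < D 0 0 ∧ 0 < D 1 1 ∧ 0 < D 2 2 ∧
          (D 0 1)^2 < D 0 0 * D 1 1 ∧
          4 * (D 0 2)^2 < (D 0 0 + D 1 1 + 2 * D 0 1) * D 2 2} := by
  ext D
  simp only [Set.mem_setOf_eq]
  constructor
  · rintro ⟨⟨hDs, hDe⟩, hdual⟩
    have d10 : D 1 0 = D 0 1 := hDs.apply 0 1
    have d20 : D 2 0 = D 0 2 := hDs.apply 0 2
    have d21 : D 2 1 = D 1 2 := hDs.apply 1 2
    refine ⟨⟨hDs, hDe⟩, ?_, ?_, ?_, ?_, ?_⟩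
    · have h := test_val hdual ![1, 0, 0] (by norm_num [Matrix.cons_val_two, Matrix.tail_cons, Matrix.head_cons]) (by
        intro h; have := congrFun h 0; norm_num [Matrix.cons_val_two, Matrix.tail_cons, Matrix.head_cons] at this)
      norm_num [Matrix.cons_val_two, Matrix.tail_cons, Matrix.head_cons] at h
      linarith
    · have h := test_val hdual ![0, 1, 0] (by norm_num [Matrix.cons_val_two, Matrix.tail_cons, Matrix.head_cons]) (by
        intro h; have := congrFun h 1; norm_num [Matrix.cons_val_two, Matrix.tail_cons, Matrix.head_cons] at this)
      norm_num [Matrix.cons_val_two, Matrix.tail_cons, Matrix.head_cons] at h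
      linarith
    · have h := test_val hdual ![0, 0, 1] (by norm_num [Matrix.cons_val_two, Matrix.tail_cons, Matrix.head_cons]) (by
        intro h; have := congrFun h 2; norm_num [Matrix.cons_val_two, Matrix.tail_cons, Matrix.head_cons] at this)
      norm_num [Matrix.cons_val_two, Matrix.tail_cons, Matrix.head_cons] at h
      linarith
    · -- q^2 < p*s, need p > 0 first
      have hp : 0 < D 0 0 := by
        have h := test_val hdual ![1, 0, 0] (by norm_num [Matrix.cons_val_two, Matrix.tail_cons, Matrix.head_cons]) (by
          intro h; have := congrFun h 0; norm_num [Matrix.cons_val_two, Matrix.tail_cons, Matrix.head_cons] at this)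
        norm_num [Matrix.cons_val_two, Matrix.tail_cons, Matrix.head_cons] at h; linarith
      have h := test_val hdual ![D 0 1, -(D 0 0), 0] (by norm_num [Matrix.cons_val_two, Matrix.tail_cons, Matrix.head_cons]) (by
        intro h; have := congrFun h 1; norm_num [Matrix.cons_val_two, Matrix.tail_cons, Matrix.head_cons] at this; exact absurd this (ne_of_gt hp))
      norm_num [Matrix.cons_val_two, Matrix.tail_cons, Matrix.head_cons] at h
      rw [d10] at h
      nlinarith [hp]
    · have hσ : 0 < D 0 0 + D 1 1 + 2 * D 0 1 := by
        have h := test_val hdual ![1, 1, 0] (by norm_num [Matrix.cons_val_two, Matrix.tail_cons, Matrix.head_cons]) (by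
          intro h; have := congrFun h 0; norm_num [Matrix.cons_val_two, Matrix.tail_cons, Matrix.head_cons] at this)
        norm_num [Matrix.cons_val_two, Matrix.tail_cons, Matrix.head_cons] at h
        rw [d10] at h
        linarith
      have h := test_val hdual
          ![2 * D 0 2, 2 * D 0 2, -(D 0 0 + D 1 1 + 2 * D 0 1)]
          (by norm_num [Matrix.cons_val_two, Matrix.tail_cons, Matrix.head_cons]) (by
        intro hzz; have h2 := congrFun hzz 2; simp at h2; linarith)
      norm_num [Matrix.cons_val_two, Matrix.tail_cons, Matrix.head_cons] at h
      rw [d10, d20, d21, ← hDe] at h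
      nlinarith [hσ]
  · rintro ⟨⟨hDs, hDe⟩, hp, hs, ht, hq, hr⟩
    refine ⟨⟨hDs, hDe⟩, fun K hKcl hK0 => ?_⟩
    obtain ⟨⟨hKs, hKe⟩, hKpsd⟩ := closure_sub hKcl
    set p := D 0 0; set q := D 0 1; set s := D 1 1; set r := D 0 2; set t := D 2 2
    set σ : ℝ := p + s + 2 * q with hσdef
    have hσ : 0 < σ := by nlinarith [sq_nonneg (p - s), sq_nonneg (p + s + 2*q)]
    have hΔ : 0 < p * s - q ^ 2 := by nlinarith
    have hT : 0 < σ * t - 4 * r ^ 2 := by nlinarith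
    set Y : M3 := Matrix.of
      ![![p, q, 2 * r * (p + q) / σ],
        ![q, s, 2 * r * (q + s) / σ],
        ![2 * r * (p + q) / σ, 2 * r * (q + s) / σ, t]] with hY
    have hYsymm : Y.IsSymm := by
      refine Matrix.IsSymm.ext fun i j => ?_
      fin_cases i <;> fin_cases j <;> simp [hY]
    have hYpd : Y.PosDef := by
      refine Matrix.PosDef.of_dotProduct_mulVec_pos (herm_of_symm hYsymm) fun x hx => ?_
      simp only [hY, dotProduct, mulVec, Fin.sum_univ_three, Matrix.of_apply,
        Matrix.cons_val', Matrix.cons_val_zero, Matrix.cons_val_one, Matrix.head_cons,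
        Matrix.head_fin_const, Matrix.cons_val_fin_one, Matrix.cons_val_two,
        Matrix.tail_cons, Pi.star_apply, star_trivial]
      have hσ' : σ ≠ 0 := ne_of_gt hσ
      have gen : ∀ x0 x1 x2 : ℝ, (x0 ≠ 0 ∨ x1 ≠ 0 ∨ x2 ≠ 0) →
          0 < x0 * (p * x0 + q * x1 + 2 * r * (p + q) / σ * x2) +
              x1 * (q * x0 + s * x1 + 2 * r * (q + s) / σ * x2) +
              x2 * (2 * r * (p + q) / σ * x0 + 2 * r * (q + s) / σ * x1 + t * x2) := by
        intro x0 x1 x2 h012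
        have key : σ^2 * (x0 * (p * x0 + q * x1 + 2 * r * (p + q) / σ * x2) +
              x1 * (q * x0 + s * x1 + 2 * r * (q + s) / σ * x2) +
              x2 * (2 * r * (p + q) / σ * x0 + 2 * r * (q + s) / σ * x1 + t * x2))
            = σ * ((p + q) * x0 + (q + s) * x1 + 2 * r * x2)^2
              + σ * (p * s - q^2) * (x0 - x1)^2
              + (σ * t - 4 * r^2) * σ * x2^2 := by
          field_simp
          ring
        have hA : 0 ≤ σ * ((p + q) * x0 + (q + s) * x1 + 2 * r * x2)^2 :=
          mul_nonneg hσ.le (sq_nonneg _)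
        have hB : 0 ≤ σ * (p * s - q^2) * (x0 - x1)^2 :=
          mul_nonneg (mul_nonneg hσ.le hΔ.le) (sq_nonneg _)
        have hC : 0 ≤ (σ * t - 4 * r^2) * σ * x2^2 :=
          mul_nonneg (mul_nonneg hT.le hσ.le) (sq_nonneg _)
        have hmain : 0 < σ * ((p + q) * x0 + (q + s) * x1 + 2 * r * x2)^2
              + σ * (p * s - q^2) * (x0 - x1)^2
              + (σ * t - 4 * r^2) * σ * x2^2 := by
          by_cases h2 : x2 = 0
          · by_cases h01 : x0 = x1
            · have hx0 : x0 ≠ 0 := by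
                rcases h012 with h | h | h
                · exact h
                · rw [h01]; exact h
                · exact absurd h2 h
              have h1 : 0 < σ * ((p + q) * x0 + (q + s) * x1 + 2 * r * x2)^2 := by
                have he : (p + q) * x0 + (q + s) * x1 + 2 * r * x2 = σ * x0 := by
                  rw [h2, ← h01, hσdef]; ring
                rw [he]
                exact mul_pos hσ (by rw [sq]; exact mul_self_pos.mpr (mul_ne_zero hσ' hx0))
              linarith
            · have h1 : 0 < σ * (p * s - q^2) * (x0 - x1)^2 :=
                mul_pos (mul_pos hσ hΔ)
                  (by rw [sq]; exact mul_self_pos.mpr (sub_ne_zero.mpr h01))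
              linarith
          · have h1 : 0 < (σ * t - 4 * r^2) * σ * x2^2 :=
              mul_pos (mul_pos hT hσ) (by rw [sq]; exact mul_self_pos.mpr h2)
            linarith
        rw [← key] at hmain
        have hσ2 : (0:ℝ) < σ^2 := by positivity
        have h4 := div_pos hmain hσ2
        rwa [mul_div_cancel_left₀ _ (ne_of_gt hσ2)] at h4
      exact gen (x 0) (x 1) (x 2) (ne_zero_iff_exists x hx)
    have htr : 0 < (K * Y).trace := trace_pos_aux hKpsd hK0 hYpd
    have k10 : K 1 0 = K 0 1 := hKs.apply 0 1
    have k20 : K 2 0 = K 0 2 := hKs.apply 0 2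
    have k21 : K 2 1 = K 1 2 := hKs.apply 1 2
    have d10 : D 1 0 = D 0 1 := hDs.apply 0 1
    have d20 : D 2 0 = D 0 2 := hDs.apply 0 2
    have d21 : D 2 1 = D 1 2 := hDs.apply 1 2
    have heq : (K * Y).trace = (K * D).trace := by
      rw [trace_expand, trace_expand]
      simp only [hY, Matrix.of_apply, Matrix.cons_val', Matrix.cons_val_zero,
        Matrix.cons_val_one, Matrix.head_cons, Matrix.head_fin_const, Matrix.cons_val_fin_one,
        Matrix.cons_val_two, Matrix.tail_cons]
      rw [k10, k20, k21, d10, d20, d21, ← hKe, ← hDe]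
      have hσ' : σ ≠ 0 := ne_of_gt hσ
      field_simp
      ring
    rw [← heq]
    exact htr
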